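/- For any z₁ > 0 and z₂ > 0, ∑_{k=1}^∞ exp(−z₁·k + z₂·log k) ≤ (C/z₁)·(z₂/z₁)^{z₂} for some absolute constant C. -/

import Mathlib

open Real

/-- Pointwise Laplace bound: for `x > 0`, `a * log x - b * x ≤ a * log (a/b) - a`. -/
lemma laplace_pointwise (a b x : ℝ) (ha : 0 < a) (hb : 0 < b) (hx : 0 < x) :
    a * Real.log x - b * x ≤ a * Real.log (a / b) - a := by
  have h1 : Real.log (x * (b / a)) ≤ x * (b / a) - 1 :=
    Real.log_le_sub_one_of_pos (by positivity)
  have h2 : Real.log (x * (b / a)) = Real.log x - Real.log (a / b) := by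
    rw [Real.log_mul (ne_of_gt hx) (by positivity), Real.log_div (ne_of_gt hb) (ne_of_gt ha),
      Real.log_div (ne_of_gt ha) (ne_of_gt hb)]
    ring
  have h3 : Real.log x - Real.log (a / b) ≤ x * b / a - 1 := by
    rw [← h2]; calc Real.log (x * (b/a)) ≤ x * (b/a) - 1 := h1
      _ = x * b / a - 1 := by ring
  have := mul_le_mul_of_nonneg_left h3 (le_of_lt ha)
  have ha' : a ≠ 0 := ne_of_gt ha
  calc a * Real.log x - b * x
      = a * (Real.log x - Real.log (a/b)) - b * x + a * Real.log (a/b) := by ring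
    _ ≤ a * (x * b / a - 1) - b * x + a * Real.log (a/b) := by linarith
    _ = a * Real.log (a / b) - a := by field_simp; ring

/-- Laplace-method bound: there is an absolute constant `C` such that for all `z₁, z₂ > 0`,
`∑_{k≥1} exp(-z₁ k + z₂ log k) ≤ (C/z₁) (z₂/z₁)^{z₂}`. -/
theorem laplace_sum_bound :
    ∃ C : ℝ, 0 < C ∧ ∀ z₁ z₂ : ℝ, 0 < z₁ → 0 < z₂ →
      ∑' k : ℕ, Real.exp (-z₁ * (k + 1) + z₂ * Real.log (k + 1)) ≤
        C / z₁ * (z₂ / z₁) ^ z₂ := by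
  refine ⟨2, by norm_num, fun z₁ z₂ hz₁ hz₂ => ?_⟩
  set t : ℝ := z₁ / 2 with ht
  have ht0 : 0 < t := by positivity
  set r : ℝ := Real.exp (-t) with hr
  have hr0 : 0 < r := Real.exp_pos _
  have hr1 : r < 1 := by
    rw [hr, Real.exp_lt_one_iff]; linarith
  set K : ℝ := Real.exp (z₂ * Real.log (z₂ / t) - z₂) with hK
  have hK0 : 0 < K := Real.exp_pos _
  -- termwise bound
  have hterm : ∀ k : ℕ, Real.exp (-z₁ * (k + 1) + z₂ * Real.log (k + 1)) ≤
      (K * r) * r ^ k := by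
    intro k
    have hx : (0:ℝ) < (k : ℝ) + 1 := by positivity
    have hpt := laplace_pointwise z₂ t ((k:ℝ)+1) hz₂ ht0 hx
    have hrpow : r ^ k = Real.exp (-t * k) := by
      rw [hr, ← Real.exp_nat_mul]; ring_nf
    rw [hrpow, hK, ← Real.exp_add, ← Real.exp_add]
    apply Real.exp_le_exp.mpr
    have : -z₁ * ((k:ℝ) + 1) = (-t * ((k:ℝ)+1)) + (-t * ((k:ℝ)+1)) := by rw [ht]; ring
    nlinarith [hpt]
  have hsumR : Summable (fun k : ℕ => (K * r) * r ^ k) :=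
    (summable_geometric_of_lt_one (le_of_lt hr0) hr1).mul_left _
  have hsumL : Summable (fun k : ℕ => Real.exp (-z₁ * (k + 1) + z₂ * Real.log (k + 1))) :=
    Summable.of_nonneg_of_le (fun k => (Real.exp_pos _).le) hterm hsumR
  have hle := Summable.tsum_le_tsum hterm hsumL hsumR
  have hgeom : ∑' k : ℕ, (K * r) * r ^ k = (K * r) * (1 - r)⁻¹ := by
    rw [tsum_mul_left, tsum_geometric_of_lt_one (le_of_lt hr0) hr1]
  -- r / (1 - r) ≤ 1 / t
  have h1r : 0 < 1 - r := by linarith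
  have hrt : r * t ≤ 1 - r := by
    have := Real.add_one_le_exp t
    have hre : r * Real.exp t = 1 := by
      rw [hr, ← Real.exp_add]; simp
    nlinarith [Real.exp_pos t]
  have hfrac : r * (1 - r)⁻¹ ≤ t⁻¹ := by
    have h : r / (1 - r) ≤ 1 / t := by
      rw [div_le_div_iff₀ h1r ht0]; nlinarith
    simpa [div_eq_mul_inv] using h
  -- K ≤ (z₂/z₁)^z₂
  have hKle : K ≤ (z₂ / z₁) ^ z₂ := by
    rw [hK, Real.rpow_def_of_pos (by positivity : (0:ℝ) < z₂ / z₁)]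
    apply Real.exp_le_exp.mpr
    have hlog : Real.log (z₂ / t) = Real.log 2 + Real.log (z₂ / z₁) := by
      have : z₂ / t = 2 * (z₂ / z₁) := by rw [ht]; field_simp
      rw [this, Real.log_mul (by norm_num) (by positivity)]
    have h2 : Real.log 2 < 1 := by
      have := Real.log_two_lt_d9; linarith
    rw [hlog]
    nlinarith
  calc ∑' k : ℕ, Real.exp (-z₁ * (k + 1) + z₂ * Real.log (k + 1))
      ≤ (K * r) * (1 - r)⁻¹ := hle.trans_eq hgeom
    _ = K * (r * (1 - r)⁻¹) := by ring
    _ ≤ (z₂ / z₁) ^ z₂ * t⁻¹ := by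
        apply mul_le_mul hKle hfrac (by positivity) (by positivity)
    _ = 2 / z₁ * (z₂ / z₁) ^ z₂ := by rw [ht]; field_simp
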